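/- For a read-once propositional formula φ (each variable occurs at most once, connectives ¬, ∧, ∨, ⊕), strong Kleene evaluation is also complete: if the K3 value of φ under a partial assignment τ is 'unassigned', then there exist two total assignments extending τ on which φ takes different classical truth values. Hence for read-once formulas, the K3 value is definite iff all completions of τ agree. -/

import Mathlib

/-- Propositional formulae over variables `α`, with connectives ¬, ∧, ∨, ⊕. -/
inductive Fm (α : Type) : Type
  | var : α → Fm α
  | not : Fm α → Fm α
  | and : Fm α → Fm α → Fm α
  | or  : Fm α → Fm α → Fm α
  | xor : Fm α → Fm α → Fm α

/-- Classical two-valued evaluation under a total assignment. -/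
def evalB {α : Type} (σ : α → Bool) : Fm α → Bool
  | .var v => σ v
  | .not φ => !(evalB σ φ)
  | .and φ ψ => evalB σ φ && evalB σ ψ
  | .or φ ψ => evalB σ φ || evalB σ ψ
  | .xor φ ψ => Bool.xor (evalB σ φ) (evalB σ ψ)

/-- Strong Kleene (K3) three-valued evaluation under a partial assignment;
`none` denotes "unassigned". -/
def evalK {α : Type} (τ : α → Option Bool) : Fm α → Option Bool
  | .var v => τ v
  | .not φ => (evalK τ φ).map (fun b => !b)
  | .and φ ψ =>
      match evalK τ φ, evalK τ ψ with
      | some false, _ => some false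
      | _, some false => some false
      | some true, some true => some true
      | _, _ => none
  | .or φ ψ =>
      match evalK τ φ, evalK τ ψ with
      | some true, _ => some true
      | _, some true => some true
      | some false, some false => some false
      | _, _ => none
  | .xor φ ψ =>
      match evalK τ φ, evalK τ ψ with
      | some a, some b => some (Bool.xor a b)
      | _, _ => none

/-- The total assignment `σ` extends the partial assignment `τ`. -/
def Extends {α : Type} (τ : α → Option Bool) (σ : α → Bool) : Prop :=
  ∀ v b, τ v = some b → σ v = b

/-- The list of variables occurring in a formula (with multiplicity). -/
def varsOf {α : Type} : Fm α → List α
  | .var v => [v]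
  | .not φ => varsOf φ
  | .and φ ψ => varsOf φ ++ varsOf ψ
  | .or φ ψ => varsOf φ ++ varsOf ψ
  | .xor φ ψ => varsOf φ ++ varsOf ψ

/-- A read-once formula: each variable occurs at most once. -/
def ReadOnce {α : Type} (φ : Fm α) : Prop := (varsOf φ).Nodup

/-- For read-once formulae K3 evaluation is complete: if the K3 value is
unassigned there are two total extensions giving different classical values;
hence the K3 value is definite iff all completions agree. -/
lemma evalB_congr {α : Type} {σ₁ σ₂ : α → Bool} :
    ∀ φ : Fm α, (∀ v ∈ varsOf φ, σ₁ v = σ₂ v) → evalB σ₁ φ = evalB σ₂ φ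
  | .var v, h => h v (by simp [varsOf])
  | .not φ, h => by simp [evalB, evalB_congr φ h]
  | .and φ ψ, h => by
      simp only [evalB]
      rw [evalB_congr φ (fun v hv => h v (by simp [varsOf, hv])),
          evalB_congr ψ (fun v hv => h v (by simp [varsOf, hv]))]
  | .or φ ψ, h => by
      simp only [evalB]
      rw [evalB_congr φ (fun v hv => h v (by simp [varsOf, hv])),
          evalB_congr ψ (fun v hv => h v (by simp [varsOf, hv]))]
  | .xor φ ψ, h => by
      simp only [evalB]
      rw [evalB_congr φ (fun v hv => h v (by simp [varsOf, hv])),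
          evalB_congr ψ (fun v hv => h v (by simp [varsOf, hv]))]

lemma extends_default {α : Type} (τ : α → Option Bool) :
    Extends τ (fun v => (τ v).getD false) := by
  intro v b h; simp [h]

lemma evalK_sound {α : Type} {τ : α → Option Bool} {σ : α → Bool}
    (hσ : Extends τ σ) : ∀ {φ : Fm α} {b : Bool}, evalK τ φ = some b → evalB σ φ = b := by
  intro φ
  induction φ with
  | var v => intro b h; exact hσ v b h
  | not φ ih =>
      intro b h
      simp only [evalK, Option.map_eq_some_iff] at h
      obtain ⟨a, ha, rfl⟩ := h
      simp [evalB, ih ha]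
  | and φ ψ ih1 ih2 =>
      intro b h
      rcases h1 : evalK τ φ with _ | (_|_) <;> rcases h2 : evalK τ ψ with _ | (_|_) <;>
        simp only [evalK, h1, h2] at h <;>
        (try exact (Option.some_ne_none b h.symm).elim) <;>
        (injection h with h) <;> subst h <;> simp only [evalB] <;>
        (try rw [ih1 h1]) <;> (try rw [ih2 h2]) <;> simp
  | or φ ψ ih1 ih2 =>
      intro b h
      rcases h1 : evalK τ φ with _ | (_|_) <;> rcases h2 : evalK τ ψ with _ | (_|_) <;>
        simp only [evalK, h1, h2] at h <;>
        (try exact (Option.some_ne_none b h.symm).elim) <;>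
        (injection h with h) <;> subst h <;> simp only [evalB] <;>
        (try rw [ih1 h1]) <;> (try rw [ih2 h2]) <;> simp
  | xor φ ψ ih1 ih2 =>
      intro b h
      rcases h1 : evalK τ φ with _ | a <;> rcases h2 : evalK τ ψ with _ | c <;>
        simp only [evalK, h1, h2, Option.some.injEq, reduceCtorEq] at h
      simp [evalB, ih1 h1, ih2 h2, ← h]

lemma combine {α : Type} {τ : α → Option Bool} {σ₁ σ₂ : α → Bool}
    (h1 : Extends τ σ₁) (h2 : Extends τ σ₂) (φ ψ : Fm α)
    (hd : List.Disjoint (varsOf φ) (varsOf ψ)) :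
    ∃ σ, Extends τ σ ∧ evalB σ φ = evalB σ₁ φ ∧ evalB σ ψ = evalB σ₂ ψ := by
  classical
  refine ⟨fun v => if v ∈ varsOf φ then σ₁ v else σ₂ v, ?_, ?_, ?_⟩
  · intro v b h
    by_cases hv : v ∈ varsOf φ <;> simp [hv, h1 v b h, h2 v b h]
  · exact evalB_congr φ (fun v hv => by simp [hv])
  · exact evalB_congr ψ (fun v hv => if_neg (fun h => hd h hv))

lemma reach {α : Type} (τ : α → Option Bool) :
    ∀ φ : Fm α, ReadOnce φ → ∀ b : Bool, evalK τ φ ≠ some (!b) →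
      ∃ σ, Extends τ σ ∧ evalB σ φ = b := by
  intro φ
  induction φ with
  | var v =>
      intro _ b h
      classical
      refine ⟨fun w => if w = v then b else (τ w).getD false, ?_, by simp [evalB]⟩
      intro w c hw
      by_cases hwv : w = v
      · subst hwv
        have : c ≠ !b := fun hc => h (by simp [evalK, hw, hc])
        cases c <;> cases b <;> simp_all
      · simp [hwv, hw]
  | not φ ih =>
      intro hro b h
      have : evalK τ φ ≠ some (!(!b)) := by
        intro hc; exact h (by simp [evalK, hc])
      obtain ⟨σ, hσ, he⟩ := ih hro (!b) this
      exact ⟨σ, hσ, by simp [evalB, he]⟩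
  | and φ ψ ih1 ih2 =>
      intro hro b h
      rw [ReadOnce, varsOf, List.nodup_append] at hro
      obtain ⟨n1, n2, hd⟩ := hro
      replace hd : List.Disjoint (varsOf φ) (varsOf ψ) := fun x hx hy => hd x hx x hy rfl
      cases b with
      | true =>
          have hφ : evalK τ φ ≠ some false := fun hc => h (by simp [evalK, hc])
          have hψ : evalK τ ψ ≠ some false := by
            intro hc
            apply h
            rcases h1 : evalK τ φ with _ | a
            · simp [evalK, h1, hc]
            · cases a <;> simp [evalK, h1, hc]
          obtain ⟨σ₁, hσ₁, he₁⟩ := ih1 n1 true (by simpa using hφ)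
          obtain ⟨σ₂, hσ₂, he₂⟩ := ih2 n2 true (by simpa using hψ)
          obtain ⟨σ, hσ, e1, e2⟩ := combine hσ₁ hσ₂ φ ψ hd
          exact ⟨σ, hσ, by simp [evalB, e1, e2, he₁, he₂]⟩
      | false =>
          have : evalK τ φ ≠ some true ∨ evalK τ ψ ≠ some true := by
            by_contra hc
            push_neg at hc
            exact h (by simp [evalK, hc.1, hc.2])
          rcases this with hφ | hψ
          · obtain ⟨σ₁, hσ₁, he₁⟩ := ih1 n1 false (by simpa using hφ)
            obtain ⟨σ, hσ, e1, _⟩ := combine hσ₁ (extends_default τ) φ ψ hd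
            exact ⟨σ, hσ, by simp [evalB, e1, he₁]⟩
          · obtain ⟨σ₂, hσ₂, he₂⟩ := ih2 n2 false (by simpa using hψ)
            obtain ⟨σ, hσ, _, e2⟩ := combine (extends_default τ) hσ₂ φ ψ hd
            exact ⟨σ, hσ, by simp [evalB, e2, he₂]⟩
  | or φ ψ ih1 ih2 =>
      intro hro b h
      rw [ReadOnce, varsOf, List.nodup_append] at hro
      obtain ⟨n1, n2, hd⟩ := hro
      replace hd : List.Disjoint (varsOf φ) (varsOf ψ) := fun x hx hy => hd x hx x hy rfl
      cases b with
      | false =>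
          have hφ : evalK τ φ ≠ some true := fun hc => h (by simp [evalK, hc])
          have hψ : evalK τ ψ ≠ some true := by
            intro hc
            apply h
            rcases h1 : evalK τ φ with _ | a
            · simp [evalK, h1, hc]
            · cases a <;> simp [evalK, h1, hc]
          obtain ⟨σ₁, hσ₁, he₁⟩ := ih1 n1 false (by simpa using hφ)
          obtain ⟨σ₂, hσ₂, he₂⟩ := ih2 n2 false (by simpa using hψ)
          obtain ⟨σ, hσ, e1, e2⟩ := combine hσ₁ hσ₂ φ ψ hd
          exact ⟨σ, hσ, by simp [evalB, e1, e2, he₁, he₂]⟩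
      | true =>
          have : evalK τ φ ≠ some false ∨ evalK τ ψ ≠ some false := by
            by_contra hc
            push_neg at hc
            exact h (by simp [evalK, hc.1, hc.2])
          rcases this with hφ | hψ
          · obtain ⟨σ₁, hσ₁, he₁⟩ := ih1 n1 true (by simpa using hφ)
            obtain ⟨σ, hσ, e1, _⟩ := combine hσ₁ (extends_default τ) φ ψ hd
            exact ⟨σ, hσ, by simp [evalB, e1, he₁]⟩
          · obtain ⟨σ₂, hσ₂, he₂⟩ := ih2 n2 true (by simpa using hψ)
            obtain ⟨σ, hσ, _, e2⟩ := combine (extends_default τ) hσ₂ φ ψ hd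
            exact ⟨σ, hσ, by simp [evalB, e2, he₂]⟩
  | xor φ ψ ih1 ih2 =>
      intro hro b h
      rw [ReadOnce, varsOf, List.nodup_append] at hro
      obtain ⟨n1, n2, hd⟩ := hro
      replace hd : List.Disjoint (varsOf φ) (varsOf ψ) := fun x hx hy => hd x hx x hy rfl
      rcases h1 : evalK τ φ with _ | a
      · rcases h2 : evalK τ ψ with _ | c
        · obtain ⟨σ₁, hσ₁, he₁⟩ := ih1 n1 b (by simp [h1])
          obtain ⟨σ₂, hσ₂, he₂⟩ := ih2 n2 false (by simp [h2])
          obtain ⟨σ, hσ, e1, e2⟩ := combine hσ₁ hσ₂ φ ψ hd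
          exact ⟨σ, hσ, by simp [evalB, e1, e2, he₁, he₂]⟩
        · obtain ⟨σ₁, hσ₁, he₁⟩ := ih1 n1 (Bool.xor b c) (by simp [h1])
          have he₂ : evalB (fun v => (τ v).getD false) ψ = c :=
            evalK_sound (extends_default τ) h2
          obtain ⟨σ, hσ, e1, e2⟩ := combine hσ₁ (extends_default τ) φ ψ hd
          refine ⟨σ, hσ, ?_⟩
          simp only [evalB]
          rw [e1, e2, he₁, he₂]
          cases b <;> cases c <;> decide
      · rcases h2 : evalK τ ψ with _ | c
        · obtain ⟨σ₂, hσ₂, he₂⟩ := ih2 n2 (Bool.xor a b) (by simp [h2])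
          have he₁ : evalB (fun v => (τ v).getD false) φ = a :=
            evalK_sound (extends_default τ) h1
          obtain ⟨σ, hσ, e1, e2⟩ := combine (extends_default τ) hσ₂ φ ψ hd
          refine ⟨σ, hσ, ?_⟩
          simp only [evalB]
          rw [e1, e2, he₁, he₂]
          cases a <;> cases b <;> decide
        · have : Bool.xor a c = b := by
            by_contra hc
            apply h
            simp [evalK, h1, h2]
            cases a <;> cases c <;> cases b <;> simp_all
          refine ⟨fun v => (τ v).getD false, extends_default τ, ?_⟩
          simp [evalB, evalK_sound (extends_default τ) h1,
            evalK_sound (extends_default τ) h2, this]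

theorem kleene_complete_readOnce {α : Type} (τ : α → Option Bool) (φ : Fm α)
    (hro : ReadOnce φ) :
    (evalK τ φ = none →
      ∃ σ₁ σ₂ : α → Bool, Extends τ σ₁ ∧ Extends τ σ₂ ∧ evalB σ₁ φ ≠ evalB σ₂ φ) ∧
    ((∃ b, evalK τ φ = some b) ↔
      ∀ σ₁ σ₂ : α → Bool, Extends τ σ₁ → Extends τ σ₂ → evalB σ₁ φ = evalB σ₂ φ) := by
  constructor
  · intro hnone
    obtain ⟨σ₁, hσ₁, he₁⟩ := reach τ φ hro true (by simp [hnone])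
    obtain ⟨σ₂, hσ₂, he₂⟩ := reach τ φ hro false (by simp [hnone])
    exact ⟨σ₁, σ₂, hσ₁, hσ₂, by simp [he₁, he₂]⟩
  · constructor
    · rintro ⟨b, hb⟩ σ₁ σ₂ h1 h2
      rw [evalK_sound h1 hb, evalK_sound h2 hb]
    · intro hall
      rcases hk : evalK τ φ with _ | b
      · obtain ⟨σ₁, hσ₁, he₁⟩ := reach τ φ hro true (by simp [hk])
        obtain ⟨σ₂, hσ₂, he₂⟩ := reach τ φ hro false (by simp [hk])
        have := hall σ₁ σ₂ hσ₁ hσ₂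
        simp [he₁, he₂] at this
      · exact ⟨b, rfl⟩
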